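/- Let V, W be finite-dimensional complex vector spaces, ħ ≠ 0, and (B₁, B₂, I, J) ADHM data with [B₁,B₂] + I∘J = ħ·id_V. Let (e_i) be any basis of W. Then V is spanned by the vectors B₂^m B₁^n I(e_i) for m, n ≥ 0 and all i. -/

import Mathlib

/-- Stability basis lemma: for ADHM data with `hbar ≠ 0` and any basis `(e_i)` of `W`,
the vectors `B₂^m B₁^n I(e_i)` span `V`. -/
theorem adhm_stability_basis
    (V W : Type) [AddCommGroup V] [Module ℂ V] [FiniteDimensional ℂ V]
    [AddCommGroup W] [Module ℂ W] [FiniteDimensional ℂ W]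
    (hbar : ℂ) (hhbar : hbar ≠ 0)
    (B₁ B₂ : V →ₗ[ℂ] V) (I : W →ₗ[ℂ] V) (J : V →ₗ[ℂ] W)
    (hADHM : B₁ ∘ₗ B₂ - B₂ ∘ₗ B₁ + I ∘ₗ J = hbar • (LinearMap.id : V →ₗ[ℂ] V))
    (ι : Type) (b : Module.Basis ι ℂ W) :
    Submodule.span ℂ {v : V | ∃ (m n : ℕ) (i : ι), v = (B₂ ^ m) ((B₁ ^ n) (I (b i)))} = ⊤ := by
  set p : Submodule ℂ V :=
    Submodule.span ℂ {v : V | ∃ (m n : ℕ) (i : ι), v = (B₂ ^ m) ((B₁ ^ n) (I (b i)))} with hp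
  have hgen : ∀ (m n : ℕ) (i : ι), (B₂ ^ m) ((B₁ ^ n) (I (b i))) ∈ p := fun m n i =>
    Submodule.subset_span ⟨m, n, i, rfl⟩
  have hcomm : ∀ v : V, B₁ (B₂ v) = B₂ (B₁ v) + hbar • v - I (J v) := by
    intro v
    have := congrArg (fun f : V →ₗ[ℂ] V => f v) hADHM
    simp only [LinearMap.add_apply, LinearMap.sub_apply, LinearMap.comp_apply,
      LinearMap.smul_apply, LinearMap.id_apply] at this
    linear_combination (norm := module) this
  have hI : ∀ w : W, I w ∈ p := by
    intro w
    have hw : w ∈ Submodule.span ℂ (Set.range b) := by rw [b.span_eq]; trivial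
    have hle : Submodule.span ℂ (Set.range b) ≤ p.comap I := by
      rw [Submodule.span_le]
      rintro _ ⟨i, rfl⟩
      simpa using hgen 0 0 i
    exact hle hw
  have hB₂ : ∀ v ∈ p, B₂ v ∈ p := by
    intro v hv
    induction hv using Submodule.span_induction with
    | mem x hx =>
      obtain ⟨m, n, i, rfl⟩ := hx
      have : B₂ ((B₂ ^ m) ((B₁ ^ n) (I (b i)))) = (B₂ ^ (m + 1)) ((B₁ ^ n) (I (b i))) := by
        rw [pow_succ']; rfl
      rw [this]; exact hgen _ _ _
    | zero => simpa using p.zero_mem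
    | add x y _ _ hx hy => rw [map_add]; exact p.add_mem hx hy
    | smul c x _ hx => rw [map_smul]; exact p.smul_mem c hx
  have hB₁gen : ∀ (m n : ℕ) (i : ι), B₁ ((B₂ ^ m) ((B₁ ^ n) (I (b i)))) ∈ p := by
    intro m
    induction m with
    | zero =>
      intro n i
      have : B₁ ((B₂ ^ 0) ((B₁ ^ n) (I (b i)))) = (B₂ ^ 0) ((B₁ ^ (n + 1)) (I (b i))) := by
        simp [pow_succ']
      rw [this]; exact hgen _ _ _
    | succ m ih =>
      intro n i
      set y := (B₂ ^ m) ((B₁ ^ n) (I (b i))) with hy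
      have h1 : (B₂ ^ (m + 1)) ((B₁ ^ n) (I (b i))) = B₂ y := by rw [pow_succ']; rfl
      rw [h1, hcomm]
      refine Submodule.sub_mem p (Submodule.add_mem p ?_ ?_) (hI _)
      · exact hB₂ _ (ih n i)
      · exact p.smul_mem _ (hgen m n i)
  have hB₁ : ∀ v ∈ p, B₁ v ∈ p := by
    intro v hv
    induction hv using Submodule.span_induction with
    | mem x hx =>
      obtain ⟨m, n, i, rfl⟩ := hx
      exact hB₁gen m n i
    | zero => simpa using p.zero_mem
    | add x y _ _ hx hy => rw [map_add]; exact p.add_mem hx hy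
    | smul c x _ hx => rw [map_smul]; exact p.smul_mem c hx
  -- quotient maps
  have h₁ : p ≤ p.comap B₁ := fun v hv => hB₁ v hv
  have h₂ : p ≤ p.comap B₂ := fun v hv => hB₂ v hv
  set f₁ : V ⧸ p →ₗ[ℂ] V ⧸ p := p.mapQ p B₁ h₁ with hf₁
  set f₂ : V ⧸ p →ₗ[ℂ] V ⧸ p := p.mapQ p B₂ h₂ with hf₂
  have key : f₁ ∘ₗ f₂ - f₂ ∘ₗ f₁ = hbar • (LinearMap.id : V ⧸ p →ₗ[ℂ] V ⧸ p) := by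
    apply Submodule.linearMap_qext
    ext v
    simp only [LinearMap.comp_apply, LinearMap.sub_apply, Submodule.mkQ_apply,
      Submodule.mapQ_apply, LinearMap.smul_apply, LinearMap.id_apply, hf₁, hf₂]
    rw [hcomm v]
    have hz : Submodule.Quotient.mk (p := p) (I (J v)) = 0 :=
      (Submodule.Quotient.mk_eq_zero p).mpr (hI (J v))
    rw [Submodule.Quotient.mk_sub, Submodule.Quotient.mk_add, hz, Submodule.Quotient.mk_smul]
    abel
  have htr := congrArg (LinearMap.trace ℂ (V ⧸ p)) key
  rw [map_sub] at htr
  have hmc : LinearMap.trace ℂ (V ⧸ p) (f₁ ∘ₗ f₂) = LinearMap.trace ℂ (V ⧸ p) (f₂ ∘ₗ f₁) :=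
    LinearMap.trace_mul_comm ℂ f₁ f₂
  rw [hmc, sub_self, map_smul, LinearMap.trace_id] at htr
  have hrank : (Module.finrank ℂ (V ⧸ p) : ℂ) = 0 :=
    (smul_eq_zero.mp htr.symm).resolve_left hhbar
  have hrank0 : Module.finrank ℂ (V ⧸ p) = 0 := by exact_mod_cast hrank
  have hsub : Subsingleton (V ⧸ p) := Module.finrank_zero_iff.mp hrank0
  exact (Submodule.Quotient.subsingleton_iff (p := p)).mp hsub
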